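/- arXiv:2301.02833 — 10 statements merged into one kernel-verified Lean document; each statement's English description precedes it below -/
import Mathlib

section
/- For every colouring c : ℚ → Fin n of the rationals with finitely many colours, there exist rationals u < v such that the open interval (u,v) is a c-shuffle, i.e. every colour that occurs at some point of (u,v) occurs densely in (u,v). -/
open Classical in
/-- every colouring of ℚ with finitely many colours admits an open
interval (u,v) which is a c-shuffle: every colour occurring in (u,v) occurs densely. -/
theorem shuffle_principle (n : ℕ) (c : ℚ → Fin n) :
    ∃ u v : ℚ, u < v ∧
      ∀ i : Fin n, (∃ z, u < z ∧ z < v ∧ c z = i) →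
        ∀ x y : ℚ, u < x → x < y → y < v → ∃ z, x < z ∧ z < y ∧ c z = i := by
  classical
  set S : ℚ → ℚ → Finset (Fin n) :=
    fun u v => Finset.univ.filter (fun i => ∃ z, u < z ∧ z < v ∧ c z = i) with hS
  have hP : ∃ k, ∃ u v : ℚ, u < v ∧ (S u v).card = k :=
    ⟨(S 0 1).card, 0, 1, by norm_num, rfl⟩
  obtain ⟨u, v, huv, hcard⟩ := Nat.find_spec hP
  refine ⟨u, v, huv, ?_⟩
  intro i hi x y hux hxy hyv
  have hsub : S x y ⊆ S u v := by
    intro j hj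
    simp only [hS, Finset.mem_filter, Finset.mem_univ, true_and] at hj ⊢
    obtain ⟨z, h1, h2, h3⟩ := hj
    exact ⟨z, lt_trans hux h1, lt_trans h2 hyv, h3⟩
  by_cases hmem : i ∈ S x y
  · simp only [hS, Finset.mem_filter, Finset.mem_univ, true_and] at hmem
    exact hmem
  · exfalso
    have hiuv : i ∈ S u v := by
      simp only [hS, Finset.mem_filter, Finset.mem_univ, true_and]
      exact hi
    have hlt : (S x y).card < (S u v).card :=
      Finset.card_lt_card (Finset.ssubset_iff_of_subset hsub |>.2 ⟨i, hiuv, hmem⟩)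
    have : (S x y).card < Nat.find hP := hcard ▸ hlt
    exact Nat.find_min hP this ⟨x, y, hxy, rfl⟩
end

section
/- Let c : ℚ → Fin n be a colouring. Suppose u < v are rationals and L ⊆ Fin n is a set of colours such that c(w) ∈ L for all w ∈ (u,v), and L has minimal cardinality among all sets of colours with this property (over all nonempty open rational intervals). Then (u,v) is a c-shuffle: every colour of L that occurs in (u,v) occurs densely in (u,v). -/
/-- if (u,v) realizes a minimal-cardinality palette L, then (u,v) is a
c-shuffle. -/
theorem minimal_palette_shuffle (n : ℕ) (c : ℚ → Fin n) (u v : ℚ) (L : Finset (Fin n))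
    (huv : u < v)
    (hL : ∀ w : ℚ, u < w → w < v → c w ∈ L)
    (hmin : ¬ ∃ (u' v' : ℚ) (L' : Finset (Fin n)), u' < v' ∧ L'.card < L.card ∧
        ∀ w : ℚ, u' < w → w < v' → c w ∈ L') :
    ∀ i : Fin n, (∃ z, u < z ∧ z < v ∧ c z = i) →
      ∀ x y : ℚ, u < x → x < y → y < v → ∃ z, x < z ∧ z < y ∧ c z = i := by
  intro i ⟨z, hz1, hz2, hz3⟩ x y hux hxy hyv
  by_contra h
  push_neg at h
  apply hmin
  refine ⟨x, y, L.erase i, hxy, ?_, ?_⟩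
  · exact Finset.card_erase_lt_of_mem (hz3 ▸ hL z hz1 hz2)
  · intro w hw1 hw2
    exact Finset.mem_erase.2 ⟨h w hw1 hw2, hL w (hux.trans hw1) (hw2.trans hyv)⟩
end

section
/- Let (P, ≤) be a finite partial order and c : {(x,y) ∈ ℚ × ℚ | x < y} → P be an ordered colouring, meaning c(x,y) ≤ c(x',y') whenever x' ≤ x < y ≤ y'. Then there exist rationals u < v such that c is constant on pairs from the open interval (u,v). -/
/-- ordered Ramsey theorem over ℚ: every ordered colouring of pairs of
rationals by a finite poset admits a homogeneous open interval. -/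
theorem ordered_ramsey_Q (P : Type*) [PartialOrder P] [Fintype P]
    (c : ℚ → ℚ → P)
    (hord : ∀ x y x' y' : ℚ, x' ≤ x → x < y → y ≤ y' → c x y ≤ c x' y') :
    ∃ u v : ℚ, u < v ∧
      ∀ x y x' y' : ℚ, u < x → x < y → y < v → u < x' → x' < y' → y' < v →
        c x y = c x' y' := by
  set f : ℚ × ℚ → P := fun p => c p.1 p.2 with hf
  obtain ⟨⟨u, v⟩, huv, hmin⟩ :=
    Set.Finite.exists_minimalFor' f {p : ℚ × ℚ | p.1 < p.2} (Set.toFinite _)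
      ⟨(0, 1), by norm_num⟩
  refine ⟨u, v, huv, ?_⟩
  have key : ∀ x y : ℚ, u < x → x < y → y < v → c x y = c u v := by
    intro x y h1 h2 h3
    have hle : c x y ≤ c u v := hord x y u v h1.le h2 h3.le
    exact le_antisymm hle (hmin (j := (x, y)) h2 hle)
  intro x y x' y' h1 h2 h3 h4 h5 h6
  rw [key x y h1 h2 h3, key x' y' h4 h5 h6]
end

section
/- Let S be a finite semigroup and c : {(x,y) ∈ ℚ × ℚ | x < y} → S an additive colouring, i.e. c(x,z) = c(x,y) · c(y,z) whenever x < y < z. Then there exist rationals u < v such that all values c(x,y) with u < x < y < v are J-equivalent in S. -/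
/-- Green's J-preorder on a semigroup. -/
def leJ {S : Type*} [Semigroup S] (s t : S) : Prop :=
  s = t ∨ (∃ a, s = t * a) ∨ (∃ a, s = a * t) ∨ (∃ a b, s = a * t * b)

/-- Green's J-equivalence. -/
def eqJ {S : Type*} [Semigroup S] (s t : S) : Prop := leJ s t ∧ leJ t s

lemma leJ_iff_withOne {S : Type*} [Semigroup S] {s t : S} :
    leJ s t ↔ ∃ a b : WithOne S, (s : WithOne S) = a * t * b := by
  constructor
  · rintro (rfl | ⟨a, rfl⟩ | ⟨a, rfl⟩ | ⟨a, b, rfl⟩)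
    · exact ⟨1, 1, by simp⟩
    · exact ⟨1, a, by simp⟩
    · exact ⟨a, 1, by simp⟩
    · exact ⟨a, b, by simp [mul_assoc]⟩
  · rintro ⟨a, b, h⟩
    induction a using WithOne.recOneCoe <;> induction b using WithOne.recOneCoe <;>
      simp only [one_mul, mul_one, ← WithOne.coe_mul, WithOne.coe_inj] at h
    · exact Or.inl h
    · exact Or.inr (Or.inl ⟨_, h⟩)
    · exact Or.inr (Or.inr (Or.inl ⟨_, h⟩))
    · exact Or.inr (Or.inr (Or.inr ⟨_, _, h⟩))

lemma leJ_trans {S : Type*} [Semigroup S] {s t u : S} (h1 : leJ s t) (h2 : leJ t u) :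
    leJ s u := by
  rw [leJ_iff_withOne] at *
  obtain ⟨a, b, h1⟩ := h1
  obtain ⟨p, q, h2⟩ := h2
  exact ⟨a * p, q * b, by rw [h1, h2]; simp [mul_assoc]⟩

/-- for an additive colouring of pairs of rationals by a finite semigroup,
there is an interval on which all colours are J-equivalent. -/
theorem additive_interval_single_Jclass (S : Type*) [Semigroup S] [Fintype S]
    (c : ℚ → ℚ → S)
    (hadd : ∀ x y z : ℚ, x < y → y < z → c x z = c x y * c y z) :
    ∃ u v : ℚ, u < v ∧
      ∀ x y x' y' : ℚ, u < x → x < y → y < v → u < x' → x' < y' → y' < v →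
        eqJ (c x y) (c x' y') := by
  classical
  set B : Finset S := Finset.univ.filter (fun s => ∃ x y : ℚ, x < y ∧ c x y = s) with hBdef
  have hB : c 0 1 ∈ B := by
    simp only [hBdef, Finset.mem_filter, Finset.mem_univ, true_and]
    exact ⟨0, 1, by norm_num, rfl⟩
  set rank : S → ℕ := fun s => (Finset.univ.filter (fun w => leJ s w)).card with hrank
  obtain ⟨t, htB, htmin⟩ := B.exists_min_image rank ⟨_, hB⟩
  obtain ⟨u, v, huv, hcuv⟩ : ∃ x y : ℚ, x < y ∧ c x y = t := by
    simpa only [hBdef, Finset.mem_filter, Finset.mem_univ, true_and] using htB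
  refine ⟨u, v, huv, ?_⟩
  have key : ∀ x y : ℚ, u < x → x < y → y < v → eqJ t (c x y) := by
    intro x y hux hxy hyv
    have h1 : leJ t (c x y) := by
      have hfac : c u v = c u x * c x y * c y v := by
        rw [hadd u x v hux (hxy.trans hyv), hadd x y v hxy hyv, ← mul_assoc]
      exact Or.inr (Or.inr (Or.inr ⟨_, _, by rw [← hcuv, hfac]⟩))
    have hmem : c x y ∈ B := by
      simp only [hBdef, Finset.mem_filter, Finset.mem_univ, true_and]
      exact ⟨x, y, hxy, rfl⟩
    have hle : rank t ≤ rank (c x y) := htmin _ hmem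
    have hsub : (Finset.univ.filter (fun w => leJ (c x y) w)) ⊆
        (Finset.univ.filter (fun w => leJ t w)) := by
      intro w hw
      simp only [Finset.mem_filter, Finset.mem_univ, true_and] at hw ⊢
      exact leJ_trans h1 hw
    have heq := Finset.eq_of_subset_of_card_le hsub hle
    have h2 : leJ (c x y) t := by
      have : t ∈ Finset.univ.filter (fun w => leJ t w) := by
        simp only [Finset.mem_filter, Finset.mem_univ, true_and]
        exact Or.inl rfl
      rw [← heq] at this
      simpa only [Finset.mem_filter, Finset.mem_univ, true_and] using this
    exact ⟨h1, h2⟩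
  intro x y x' y' hux hxy hyv hux' hxy' hyv'
  obtain ⟨h1, h2⟩ := key x y hux hxy hyv
  obtain ⟨h1', h2'⟩ := key x' y' hux' hxy' hyv'
  exact ⟨leJ_trans h2 h1', leJ_trans h2' h1⟩
end

section
/- Let S be a finite semigroup and c : {(x,y) ∈ ℚ × ℚ | x < y} → S an additive colouring. Then there exist rationals x < y and a finite partition of the open interval (x,y) into sets D₁, …, D_k, each dense in (x,y), such that each D_i is c-homogeneous: c takes at most one value on pairs (a,b) with a, b ∈ D_i and a < b. -/
/-- Choose a subinterval minimizing the cardinality of a monotone interval-indexed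
finite set. On the minimizing interval, the set is constant over all subintervals. -/
private lemma minimizeF {γ : Type*} (F : ℚ → ℚ → Finset γ)
    (mono : ∀ a b a' b', a ≤ a' → a' < b' → b' ≤ b → F a' b' ⊆ F a b)
    (X Y : ℚ) (hXY : X < Y) :
    ∃ x y, X ≤ x ∧ x < y ∧ y ≤ Y ∧
      ∀ a b, x ≤ a → a < b → b ≤ y → F a b = F x y := by
  classical
  have hex : ∃ n : ℕ, ∃ x y : ℚ, X ≤ x ∧ x < y ∧ y ≤ Y ∧ (F x y).card = n :=
    ⟨(F X Y).card, X, Y, le_refl _, hXY, le_refl _, rfl⟩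
  obtain ⟨x, y, hx, hxy, hy, hcard⟩ := Nat.find_spec hex
  refine ⟨x, y, hx, hxy, hy, ?_⟩
  intro a b ha hab hb
  have hsub : F a b ⊆ F x y := mono x y a b ha hab hb
  have hge : Nat.find hex ≤ (F a b).card :=
    Nat.find_min' hex ⟨a, b, le_trans hx ha, hab, le_trans hb hy, rfl⟩
  exact Finset.eq_of_subset_of_card_le hsub (by omega)

/-- Main combinatorial lemma, by induction on the size of the colour set `H`. -/
private lemma mainLemma {S : Type*} [Semigroup S] (c : ℚ → ℚ → S)
    (hadd : ∀ x y z : ℚ, x < y → y < z → c x z = c x y * c y z) :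
    ∀ (n : ℕ) (H : Finset S) (X Y : ℚ) (D : Set ℚ), H.card ≤ n → X < Y →
      (∀ α β, X ≤ α → α < β → β ≤ Y → ∃ d, d ∈ D ∧ α < d ∧ d < β) →
      (∀ d d', d ∈ D → d' ∈ D → d < d' → c d d' ∈ H) →
      ∃ x y k, X ≤ x ∧ x < y ∧ y ≤ Y ∧ ∃ g : ℚ → ℕ,
        (∀ q, q ∈ D → x < q → q < y → g q < k) ∧
        (∀ a b a' b', a ∈ D → b ∈ D → a' ∈ D → b' ∈ D →
          x < a → a < b → b < y → x < a' → a' < b' → b' < y →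
          g a = g b → g a' = g b' → g a = g a' → c a b = c a' b') := by
  intro n
  induction n with
  | zero =>
      intro H X Y D hcard hXY hSD hCOL
      exfalso
      obtain ⟨d, hd, _, hdm⟩ := hSD X ((X + Y) / 2) le_rfl (by linarith) (by linarith)
      obtain ⟨d', hd', hmd', _⟩ := hSD ((X + Y) / 2) Y (by linarith) (by linarith) le_rfl
      have hmem : c d d' ∈ H := hCOL d d' hd hd' (lt_trans hdm hmd')
      have hH : H = ∅ := Finset.card_eq_zero.mp (Nat.le_zero.mp hcard)
      simp [hH] at hmem
  | succ n ih =>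
      intro H X Y D hcard hXY hSD hCOL
      classical
      by_cases hH1 : H.card ≤ 1
      · refine ⟨X, Y, 1, le_rfl, hXY, le_rfl, fun _ => 0,
          fun _ _ _ _ => Nat.one_pos, ?_⟩
        intro a b a' b' ha hb ha' hb' _ hab _ _ hab' _ _ _ _
        exact Finset.card_le_one.mp hH1 _ (hCOL a b ha hb hab) _ (hCOL a' b' ha' hb' hab')
      · have hn1 : 1 ≤ n := by omega
        obtain ⟨d₀, hd₀D, hXd₀, hd₀m⟩ := hSD X ((X + Y) / 2) le_rfl (by linarith) (by linarith)
        obtain ⟨d₁, hd₁D, hmd₁, hd₁Y⟩ := hSD ((X + Y) / 2) Y (by linarith) (by linarith) le_rfl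
        have hd01 : d₀ < d₁ := lt_trans hd₀m hmd₁
        set φ : ℚ → S × S := fun q => (c d₀ q, c q d₁) with hφdef
        set Vs : ℚ → ℚ → Finset (S × S) := fun α β =>
          (H ×ˢ H).filter fun v => ∃ q, q ∈ D ∧ α < q ∧ q < β ∧ φ q = v with hVsdef
        have hmono : ∀ a b a' b', a ≤ a' → a' < b' → b' ≤ b → Vs a' b' ⊆ Vs a b := by
          intro a b a' b' h1 h2 h3 v hv
          simp only [hVsdef, Finset.mem_filter] at hv ⊢
          obtain ⟨hvH, q, hqD, h4, h5, h6⟩ := hv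
          exact ⟨hvH, q, hqD, lt_of_le_of_lt h1 h4, lt_of_lt_of_le h5 h3, h6⟩
        obtain ⟨x₀, y₀, hx₀, hxy₀, hy₀, hVconst⟩ := minimizeF Vs hmono d₀ d₁ hd01
        have hφV : ∀ q, q ∈ D → x₀ < q → q < y₀ → φ q ∈ Vs x₀ y₀ := by
          intro q hq h1 h2
          simp only [hVsdef, Finset.mem_filter, Finset.mem_product]
          refine ⟨⟨?_, ?_⟩, q, hq, h1, h2, rfl⟩
          · exact hCOL d₀ q hd₀D hq (lt_of_le_of_lt hx₀ h1)
          · exact hCOL q d₁ hq hd₁D (lt_of_lt_of_le h2 hy₀)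
        have hVocc : ∀ v, v ∈ Vs x₀ y₀ → ∀ a b, x₀ ≤ a → a < b → b ≤ y₀ →
            ∃ q, q ∈ D ∧ a < q ∧ q < b ∧ φ q = v := by
          intro v hv a b h1 h2 h3
          rw [← hVconst a b h1 h2 h3] at hv
          simp only [hVsdef, Finset.mem_filter] at hv
          exact hv.2
        set Hv : S × S → Finset S :=
          fun v => H.filter fun u => v.1 * u = v.1 ∧ u * v.2 = v.2 with hHvdef
        have hclasscol : ∀ v a b, a ∈ D → b ∈ D → x₀ < a → a < b → b < y₀ →
            φ a = v → φ b = v → c a b ∈ Hv v := by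
          intro v a b haD hbD h1 h2 h3 hpa hpb
          have hd₀a : d₀ < a := lt_of_le_of_lt hx₀ h1
          have hbd₁ : b < d₁ := lt_of_lt_of_le h3 hy₀
          have e1 : c d₀ b = c d₀ a * c a b := hadd d₀ a b hd₀a h2
          have e2 : c a d₁ = c a b * c b d₁ := hadd a b d₁ h2 hbd₁
          have h4 : c d₀ a = v.1 := congrArg Prod.fst hpa
          have h5 : c d₀ b = v.1 := congrArg Prod.fst hpb
          have h6 : c a d₁ = v.2 := congrArg Prod.snd hpa
          have h7 : c b d₁ = v.2 := congrArg Prod.snd hpb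
          simp only [hHvdef, Finset.mem_filter]
          refine ⟨hCOL a b haD hbD h2, ?_, ?_⟩
          · rw [← h4, ← e1, h5, h4]
          · rw [← h7, ← e2, h6, h7]
        -- the list-processing lemma: partition a list of classes on a common subinterval
        have aux : ∀ L : List (Set ℚ × Finset S),
            (∀ p, p ∈ L → p.2.card ≤ n) →
            (∀ p, p ∈ L → ∀ a b, a ∈ p.1 → b ∈ p.1 → a < b → c a b ∈ p.2) →
            ∀ x y : ℚ, x < y →
            (∀ p, p ∈ L → ∀ α β, x ≤ α → α < β → β ≤ y → ∃ q, q ∈ p.1 ∧ α < q ∧ q < β) →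
            ∃ x' y' : ℚ, ∃ k : ℕ, ∃ g : ℚ → ℕ, x ≤ x' ∧ x' < y' ∧ y' ≤ y ∧
              (∀ p, p ∈ L → ∀ q, q ∈ p.1 → x' < q → q < y' → g q < k) ∧
              (∀ a b a' b',
                (∃ p, p ∈ L ∧ a ∈ p.1) → (∃ p, p ∈ L ∧ b ∈ p.1) →
                (∃ p, p ∈ L ∧ a' ∈ p.1) → (∃ p, p ∈ L ∧ b' ∈ p.1) →
                x' < a → a < b → b < y' → x' < a' → a' < b' → b' < y' →
                g a = g b → g a' = g b' → g a = g a' → c a b = c a' b') := by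
          intro L
          induction L with
          | nil =>
              intro _ _ x y hxy _
              refine ⟨x, y, 0, fun _ => 0, le_rfl, hxy, le_rfl, ?_, ?_⟩
              · intro p hp
                exact absurd hp List.not_mem_nil
              · rintro a b a' b' ⟨p, hp, -⟩
                exact absurd hp List.not_mem_nil
          | cons p T ihT =>
              intro hcards hcols x y hxy hSDL
              obtain ⟨x₁, y₁, k₁, hx1, hxy1, hy1, g₁, hbd₁, hhom₁⟩ :=
                ih p.2 x y {r | r ∈ p.1 ∧ x < r ∧ r < y}
                  (hcards p List.mem_cons_self) hxy
                  (by
                    intro α β h1 h2 h3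
                    obtain ⟨q, hq, h4, h5⟩ := hSDL p List.mem_cons_self α β h1 h2 h3
                    exact ⟨q, ⟨hq, lt_of_le_of_lt h1 h4, lt_of_lt_of_le h5 h3⟩, h4, h5⟩)
                  (fun d d' hd hd' hdd' => hcols p List.mem_cons_self d d' hd.1 hd'.1 hdd')
              obtain ⟨x₂, y₂, k₂, g₂, hx2, hxy2, hy2, hbd₂, hhom₂⟩ :=
                ihT (fun p' hp' => hcards p' (List.mem_cons_of_mem p hp'))
                    (fun p' hp' => hcols p' (List.mem_cons_of_mem p hp'))
                    x₁ y₁ hxy1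
                    (fun p' hp' α β h1 h2 h3 =>
                      hSDL p' (List.mem_cons_of_mem p hp') α β (le_trans hx1 h1) h2
                        (le_trans h3 hy1))
              have hxx2 : x ≤ x₂ := le_trans hx1 hx2
              have hy2y : y₂ ≤ y := le_trans hy2 hy1
              have hmemD : ∀ r, r ∈ p.1 → x₂ < r → r < y₂ →
                  (r ∈ {r | r ∈ p.1 ∧ x < r ∧ r < y}) ∧ x₁ < r ∧ r < y₁ := by
                intro r hr h1 h2
                exact ⟨⟨hr, lt_of_le_of_lt hxx2 h1, lt_of_lt_of_le h2 hy2y⟩,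
                  lt_of_le_of_lt hx2 h1, lt_of_lt_of_le h2 hy2⟩
              classical
              refine ⟨x₂, y₂, k₁ + k₂,
                fun q => if q ∈ p.1 then g₁ q else k₁ + g₂ q,
                hxx2, hxy2, hy2y, ?_, ?_⟩
              · intro p' hp' q hq h1 h2
                show (if q ∈ p.1 then g₁ q else k₁ + g₂ q) < k₁ + k₂
                rcases List.mem_cons.mp hp' with heq | hp'
                · have hqp : q ∈ p.1 := by rw [heq] at hq; exact hq
                  obtain ⟨hD', hq1, hq2⟩ := hmemD q hqp h1 h2
                  have := hbd₁ q hD' hq1 hq2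
                  rw [if_pos hqp]
                  omega
                · by_cases hqp : q ∈ p.1
                  · obtain ⟨hD', hq1, hq2⟩ := hmemD q hqp h1 h2
                    have := hbd₁ q hD' hq1 hq2
                    rw [if_pos hqp]
                    omega
                  · have := hbd₂ p' hp' q hq h1 h2
                    rw [if_neg hqp]
                    omega
              · intro a b a' b' hUa hUb hUa' hUb' h1 h2 h3 h4 h5 h6 e1 e2 e3
                simp only at e1 e2 e3
                by_cases haP : a ∈ p.1
                · obtain ⟨haD', hax1, hay1⟩ := hmemD a haP h1 (lt_trans h2 h3)
                  have hlt : g₁ a < k₁ := hbd₁ a haD' hax1 hay1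
                  rw [if_pos haP] at e1 e3
                  have hbP : b ∈ p.1 := by
                    by_contra hbP
                    rw [if_neg hbP] at e1
                    omega
                  obtain ⟨hbD', hbx1, hby1⟩ := hmemD b hbP (lt_trans h1 h2) h3
                  rw [if_pos hbP] at e1
                  have ha'P : a' ∈ p.1 := by
                    by_contra hP
                    rw [if_neg hP] at e3
                    omega
                  obtain ⟨ha'D', ha'x1, ha'y1⟩ := hmemD a' ha'P h4 (lt_trans h5 h6)
                  rw [if_pos ha'P] at e2 e3
                  have hlt' : g₁ a' < k₁ := hbd₁ a' ha'D' ha'x1 ha'y1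
                  have hb'P : b' ∈ p.1 := by
                    by_contra hP
                    rw [if_neg hP] at e2
                    omega
                  obtain ⟨hb'D', hb'x1, hb'y1⟩ := hmemD b' hb'P (lt_trans h4 h5) h6
                  rw [if_pos hb'P] at e2
                  exact hhom₁ a b a' b' haD' hbD' ha'D' hb'D'
                    hax1 h2 hby1 ha'x1 h5 hb'y1 e1 e2 e3
                · rw [if_neg haP] at e1 e3
                  have hbP : b ∉ p.1 := by
                    intro hbP
                    obtain ⟨hbD', hbx1, hby1⟩ := hmemD b hbP (lt_trans h1 h2) h3
                    have := hbd₁ b hbD' hbx1 hby1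
                    rw [if_pos hbP] at e1
                    omega
                  rw [if_neg hbP] at e1
                  have ha'P : a' ∉ p.1 := by
                    intro hP
                    obtain ⟨hD', hx1', hy1'⟩ := hmemD a' hP h4 (lt_trans h5 h6)
                    have := hbd₁ a' hD' hx1' hy1'
                    rw [if_pos hP] at e3
                    omega
                  rw [if_neg ha'P] at e2 e3
                  have hb'P : b' ∉ p.1 := by
                    intro hP
                    obtain ⟨hD', hx1', hy1'⟩ := hmemD b' hP (lt_trans h4 h5) h6
                    have := hbd₁ b' hD' hx1' hy1'
                    rw [if_pos hP] at e2
                    omega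
                  rw [if_neg hb'P] at e2
                  have tailU : ∀ r, (∃ p', p' ∈ p :: T ∧ r ∈ p'.1) → r ∉ p.1 →
                      ∃ p', p' ∈ T ∧ r ∈ p'.1 := by
                    rintro r ⟨p', hp', hr⟩ hrP
                    rcases List.mem_cons.mp hp' with heq | h
                    · exact absurd (heq ▸ hr) hrP
                    · exact ⟨p', h, hr⟩
                  exact hhom₂ a b a' b' (tailU a hUa haP) (tailU b hUb hbP)
                    (tailU a' hUa' ha'P) (tailU b' hUb' hb'P)
                    h1 h2 h3 h4 h5 h6 (by omega) (by omega) (by omega)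
        -- common finishing step
        have finishCase : ∀ (L : List (Set ℚ × Finset S)) (xa ya : ℚ),
            X < xa → xa < ya → ya < Y →
            (∀ p, p ∈ L → p.2.card ≤ n) →
            (∀ p, p ∈ L → ∀ a b, a ∈ p.1 → b ∈ p.1 → a < b → c a b ∈ p.2) →
            (∀ p, p ∈ L → ∀ α β, xa ≤ α → α < β → β ≤ ya → ∃ q, q ∈ p.1 ∧ α < q ∧ q < β) →
            (∀ q, q ∈ D → xa < q → q < ya → ∃ p, p ∈ L ∧ q ∈ p.1) →
            ∃ x y k, X ≤ x ∧ x < y ∧ y ≤ Y ∧ ∃ g : ℚ → ℕ,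
              (∀ q, q ∈ D → x < q → q < y → g q < k) ∧
              (∀ a b a' b', a ∈ D → b ∈ D → a' ∈ D → b' ∈ D →
                x < a → a < b → b < y → x < a' → a' < b' → b' < y →
                g a = g b → g a' = g b' → g a = g a' → c a b = c a' b') := by
          intro L xa ya hXxa hxaya hyaY hcards hcols hSDL hcovL
          obtain ⟨x', y', k, g, hxx', hx'y', hy'y, hbd, hhom⟩ :=
            aux L hcards hcols xa ya hxaya hSDL
          have hcov : ∀ q, q ∈ D → x' < q → q < y' → ∃ p, p ∈ L ∧ q ∈ p.1 := by
            intro q hq h1 h2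
            exact hcovL q hq (lt_of_le_of_lt hxx' h1) (lt_of_lt_of_le h2 hy'y)
          refine ⟨x', y', k, le_trans (le_of_lt hXxa) hxx', hx'y',
            le_trans hy'y (le_of_lt hyaY), g, ?_, ?_⟩
          · intro q hq h1 h2
            obtain ⟨pp, hpL, hqp⟩ := hcov q hq h1 h2
            exact hbd pp hpL q hqp h1 h2
          · intro a b a' b' ha hb ha' hb' h1 h2 h3 h4 h5 h6 e1 e2 e3
            exact hhom a b a' b' (hcov a ha h1 (lt_trans h2 h3)) (hcov b hb (lt_trans h1 h2) h3)
              (hcov a' ha' h4 (lt_trans h5 h6)) (hcov b' hb' (lt_trans h4 h5) h6)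
              h1 h2 h3 h4 h5 h6 e1 e2 e3
        set Cset : S × S → Set ℚ :=
          fun w => {q | q ∈ D ∧ x₀ < q ∧ q < y₀ ∧ φ q = w} with hCsetdef
        have hCsetSD : ∀ w, w ∈ Vs x₀ y₀ → ∀ α β, x₀ ≤ α → α < β → β ≤ y₀ →
            ∃ q, q ∈ Cset w ∧ α < q ∧ q < β := by
          intro w hw α β h1 h2 h3
          obtain ⟨q, hqD, h4, h5, h6⟩ := hVocc w hw α β h1 h2 h3
          exact ⟨q, ⟨hqD, lt_of_le_of_lt h1 h4, lt_of_lt_of_le h5 h3, h6⟩, h4, h5⟩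
        have hCsetCol : ∀ w, ∀ a b, a ∈ Cset w → b ∈ Cset w → a < b → c a b ∈ Hv w := by
          intro w a b ha hb hab
          exact hclasscol w a b ha.1 hb.1 ha.2.1 hab hb.2.2.1 ha.2.2.2 hb.2.2.2
        have hHvne : ∀ w, Hv w ≠ H → (Hv w).card ≤ n := by
          intro w hne
          have hsub : Hv w ⊆ H := Finset.filter_subset _ _
          have hlt : (Hv w).card < H.card := by
            rcases lt_or_eq_of_le (Finset.card_le_card hsub) with h | h
            · exact h
            · exact absurd (Finset.eq_of_subset_of_card_le hsub (le_of_eq h.symm)) hne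
          omega
        have hXx₀ : X < x₀ := lt_of_lt_of_le hXd₀ hx₀
        have hy₀Y : y₀ < Y := lt_of_le_of_lt hy₀ hd₁Y
        by_cases hbad : ∃ v, v ∈ Vs x₀ y₀ ∧ Hv v = H
        · obtain ⟨v, hvV, hHvv⟩ := hbad
          have hvH : v.1 ∈ H ∧ v.2 ∈ H := by
            have h := (Finset.mem_filter.mp (by simpa only [hVsdef] using hvV)).1
            exact Finset.mem_product.mp h
          have hall : ∀ u, u ∈ H → v.1 * u = v.1 ∧ u * v.2 = v.2 := by
            intro u hu
            rw [← hHvv] at hu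
            simp only [hHvdef, Finset.mem_filter] at hu
            exact hu.2
          have hveq : v.2 = v.1 := ((hall v.1 hvH.1).2).symm.trans (hall v.2 hvH.2).1
          have hz1 : ∀ u, u ∈ H → v.1 * u = v.1 := fun u hu => (hall u hu).1
          have hz2 : ∀ u, u ∈ H → u * v.1 = v.1 := by
            intro u hu
            have h := (hall u hu).2
            rwa [hveq] at h
          have huniq : ∀ w, w ∈ Vs x₀ y₀ → Hv w = H → w = v := by
            intro w hwV hHw
            have hwH : w.1 ∈ H ∧ w.2 ∈ H := by
              have h := (Finset.mem_filter.mp (by simpa only [hVsdef] using hwV)).1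
              exact Finset.mem_product.mp h
            have hallw : ∀ u, u ∈ H → w.1 * u = w.1 ∧ u * w.2 = w.2 := by
              intro u hu
              rw [← hHw] at hu
              simp only [hHvdef, Finset.mem_filter] at hu
              exact hu.2
            have hweq : w.2 = w.1 := ((hallw w.1 hwH.1).2).symm.trans (hallw w.2 hwH.2).1
            have hw1 : w.1 = v.1 := ((hallw v.1 hvH.1).1).symm.trans (hz2 w.1 hwH.1)
            exact Prod.ext_iff.mpr ⟨hw1, (hweq.trans hw1).trans hveq.symm⟩
          have htail : ∀ pp, pp ∈ ((Vs x₀ y₀).erase v).toList.map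
              (fun w => (Cset w, Hv w)) → pp.2.card ≤ n := by
            intro pp hp
            obtain ⟨w, hwl, rfl⟩ := List.mem_map.mp hp
            have hw := Finset.mem_toList.mp hwl
            have hwV := Finset.mem_of_mem_erase hw
            have hwne := Finset.ne_of_mem_erase hw
            exact hHvne w (fun h => hwne (huniq w hwV h))
          by_cases hBz : ∀ a b, a ∈ Cset v → b ∈ Cset v → a < b → c a b = v.1
          · -- the zero class is itself homogeneous
            apply finishCase
              ((Cset v, ({v.1} : Finset S)) ::
                ((Vs x₀ y₀).erase v).toList.map (fun w => (Cset w, Hv w)))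
              x₀ y₀ hXx₀ hxy₀ hy₀Y
            · intro pp hp
              rcases List.mem_cons.mp hp with heq | hp
              · rw [heq]
                simpa using hn1
              · exact htail pp hp
            · intro pp hp a b ha hb hab
              rcases List.mem_cons.mp hp with heq | hp
              · rw [heq] at ha hb ⊢
                simp only [Finset.mem_singleton]
                exact hBz a b ha hb hab
              · obtain ⟨w, hwl, rfl⟩ := List.mem_map.mp hp
                exact hCsetCol w a b ha hb hab
            · intro pp hp α β h1 h2 h3
              rcases List.mem_cons.mp hp with heq | hp
              · rw [heq]
                exact hCsetSD v hvV α β h1 h2 h3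
              · obtain ⟨w, hwl, rfl⟩ := List.mem_map.mp hp
                exact hCsetSD w (Finset.mem_of_mem_erase (Finset.mem_toList.mp hwl)) α β h1 h2 h3
            · intro q hq h1 h2
              by_cases hqv : φ q = v
              · exact ⟨(Cset v, {v.1}), List.mem_cons_self, hq, h1, h2, hqv⟩
              · refine ⟨(Cset (φ q), Hv (φ q)), List.mem_cons_of_mem _ (List.mem_map.mpr
                  ⟨φ q, Finset.mem_toList.mpr (Finset.mem_erase.mpr
                    ⟨hqv, hφV q hq h1 h2⟩), rfl⟩), hq, h1, h2, rfl⟩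
          · -- the zero class contains a non-zero pair; its colour set shrinks
            push_neg at hBz
            obtain ⟨aB, bB, haB, hbB, habB, hcabB⟩ := hBz
            obtain ⟨haBD, haB1, haB2, haBφ⟩ := haB
            obtain ⟨hbBD, hbB1, hbB2, hbBφ⟩ := hbB
            apply finishCase
              (({q | q ∈ D ∧ aB < q ∧ q < bB ∧ φ q = v}, H.erase v.1) ::
                ((Vs x₀ y₀).erase v).toList.map (fun w => (Cset w, Hv w)))
              aB bB (lt_trans hXx₀ haB1) habB (lt_trans hbB2 hy₀Y)
            · intro pp hp
              rcases List.mem_cons.mp hp with heq | hp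
              · rw [heq]
                have h := Finset.card_erase_of_mem hvH.1
                simp only [h]
                omega
              · exact htail pp hp
            · intro pp hp a b ha hb hab
              rcases List.mem_cons.mp hp with heq | hp
              · rw [heq] at ha hb ⊢
                obtain ⟨haD, ha1, ha2, haφ⟩ := ha
                obtain ⟨hbD, hb1, hb2, hbφ⟩ := hb
                refine Finset.mem_erase.mpr ⟨?_, hCOL a b haD hbD hab⟩
                intro heqz
                have e2 : c a bB = c a b * c b bB := hadd a b bB hab hb2
                have e1 : c aB bB = c aB a * c a bB := hadd aB a bB ha1 (lt_trans hab hb2)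
                have hc1 : c b bB ∈ H := hCOL b bB hbD hbBD hb2
                have hc2 : c aB a ∈ H := hCOL aB a haBD haD ha1
                apply hcabB
                rw [e1, e2, heqz, hz1 _ hc1, hz2 _ hc2]
              · obtain ⟨w, hwl, rfl⟩ := List.mem_map.mp hp
                exact hCsetCol w a b ha hb hab
            · intro pp hp α β h1 h2 h3
              have hx₀α : x₀ ≤ α := le_trans (le_of_lt haB1) h1
              have hβy₀ : β ≤ y₀ := le_trans h3 (le_of_lt hbB2)
              rcases List.mem_cons.mp hp with heq | hp
              · rw [heq]
                obtain ⟨q, hqD, h4, h5, h6⟩ := hVocc v hvV α β hx₀α h2 hβy₀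
                exact ⟨q, ⟨hqD, lt_of_le_of_lt h1 h4, lt_of_lt_of_le h5 h3, h6⟩, h4, h5⟩
              · obtain ⟨w, hwl, rfl⟩ := List.mem_map.mp hp
                exact hCsetSD w (Finset.mem_of_mem_erase (Finset.mem_toList.mp hwl)) α β
                  hx₀α h2 hβy₀
            · intro q hq h1 h2
              have hq1 : x₀ < q := lt_trans haB1 h1
              have hq2 : q < y₀ := lt_trans h2 hbB2
              by_cases hqv : φ q = v
              · exact ⟨({q | q ∈ D ∧ aB < q ∧ q < bB ∧ φ q = v}, H.erase v.1),
                  List.mem_cons_self, hq, h1, h2, hqv⟩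
              · refine ⟨(Cset (φ q), Hv (φ q)), List.mem_cons_of_mem _ (List.mem_map.mpr
                  ⟨φ q, Finset.mem_toList.mpr (Finset.mem_erase.mpr
                    ⟨hqv, hφV q hq hq1 hq2⟩), rfl⟩), hq, hq1, hq2, rfl⟩
        · -- good case: all classes have strictly smaller colour sets
          push_neg at hbad
          apply finishCase ((Vs x₀ y₀).toList.map fun w => (Cset w, Hv w))
            x₀ y₀ hXx₀ hxy₀ hy₀Y
          · intro pp hp
            obtain ⟨w, hwl, rfl⟩ := List.mem_map.mp hp
            exact hHvne w (hbad w (Finset.mem_toList.mp hwl))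
          · intro pp hp a b ha hb hab
            obtain ⟨w, hwl, rfl⟩ := List.mem_map.mp hp
            exact hCsetCol w a b ha hb hab
          · intro pp hp α β h1 h2 h3
            obtain ⟨w, hwl, rfl⟩ := List.mem_map.mp hp
            exact hCsetSD w (Finset.mem_toList.mp hwl) α β h1 h2 h3
          · intro q hq h1 h2
            exact ⟨(Cset (φ q), Hv (φ q)), List.mem_map.mpr
              ⟨φ q, Finset.mem_toList.mpr (hφV q hq h1 h2), rfl⟩, hq, h1, h2, rfl⟩

/-- additive Ramsey theorem over ℚ: for every additive colouring there is
an interval (x,y) partitioned into finitely many dense c-homogeneous sets. -/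
theorem additive_ramsey_Q (S : Type*) [Semigroup S] [Fintype S]
    (c : ℚ → ℚ → S)
    (hadd : ∀ x y z : ℚ, x < y → y < z → c x z = c x y * c y z) :
    ∃ x y : ℚ, x < y ∧ ∃ (k : ℕ) (D : Fin k → Set ℚ),
      (∀ i, D i ⊆ Set.Ioo x y) ∧
      (∀ q ∈ Set.Ioo x y, ∃! i, q ∈ D i) ∧
      (∀ i, ∀ a b : ℚ, x < a → a < b → b < y → ∃ z ∈ D i, a < z ∧ z < b) ∧
      (∀ i, ∀ a b a' b' : ℚ, a ∈ D i → b ∈ D i → a < b →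
        a' ∈ D i → b' ∈ D i → a' < b' → c a b = c a' b') := by
  classical
  obtain ⟨x₁, y₁, k, hx1, hxy1, hy1, g, hbd, hhom⟩ :=
    mainLemma c hadd (Fintype.card S) Finset.univ 0 1 (Set.Ioo (0:ℚ) 1)
      (le_of_eq Finset.card_univ) one_pos
      (by
        intro α β h1 h2 h3
        refine ⟨(α + β) / 2, ⟨by linarith, by linarith⟩, by linarith, by linarith⟩)
      (fun d d' _ _ _ => Finset.mem_univ _)
  set F : ℚ → ℚ → Finset ℕ :=
    fun α β => (Finset.range k).filter fun i => ∃ q, α < q ∧ q < β ∧ g q = i with hFdef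
  have hmono : ∀ a b a' b', a ≤ a' → a' < b' → b' ≤ b → F a' b' ⊆ F a b := by
    intro a b a' b' h1 h2 h3 i hi
    simp only [hFdef, Finset.mem_filter] at hi ⊢
    obtain ⟨hik, q, h4, h5, h6⟩ := hi
    exact ⟨hik, q, lt_of_le_of_lt h1 h4, lt_of_lt_of_le h5 h3, h6⟩
  obtain ⟨x, y, hx, hxy, hy, hNconst⟩ := minimizeF F hmono x₁ y₁ hxy1
  set N : Finset ℕ := F x y with hNdef
  set idx : Fin N.card → ℕ := fun i => ((N.equivFin.symm i : N) : ℕ) with hidxdef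
  have hidxmem : ∀ i, idx i ∈ N := fun i => (N.equivFin.symm i).2
  have hidxinj : ∀ i j, idx i = idx j → i = j := by
    intro i j h
    have h2 : (N.equivFin.symm i) = (N.equivFin.symm j) := Subtype.ext h
    exact N.equivFin.symm.injective h2
  have hIoo : ∀ q, q ∈ Set.Ioo x y → q ∈ Set.Ioo (0:ℚ) 1 ∧ x₁ < q ∧ q < y₁ := by
    intro q hq
    obtain ⟨h1, h2⟩ := hq
    have hx1q : x₁ < q := lt_of_le_of_lt hx h1
    have hqy1 : q < y₁ := lt_of_lt_of_le h2 hy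
    exact ⟨⟨lt_of_le_of_lt hx1 hx1q, lt_of_lt_of_le hqy1 hy1⟩, hx1q, hqy1⟩
  refine ⟨x, y, hxy, N.card, (fun i => {q | q ∈ Set.Ioo x y ∧ g q = idx i}), ?_, ?_, ?_, ?_⟩
  · intro i q hq
    exact hq.1
  · intro q hq
    obtain ⟨hq01, hx1q, hqy1⟩ := hIoo q hq
    have hgk : g q < k := hbd q hq01 hx1q hqy1
    have hgN : g q ∈ N := by
      simp only [hNdef, hFdef, Finset.mem_filter]
      exact ⟨Finset.mem_range.mpr hgk, q, hq.1, hq.2, rfl⟩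
    have hval : idx (N.equivFin ⟨g q, hgN⟩) = g q := by
      simp only [hidxdef, Equiv.symm_apply_apply]
    refine ⟨N.equivFin ⟨g q, hgN⟩, ⟨hq, hval.symm⟩, ?_⟩
    intro j hj
    exact hidxinj j _ (hj.2.symm.trans hval.symm)
  · intro i a b hxa hab hby
    have hmem : idx i ∈ F a b := by
      rw [hNconst a b (le_of_lt hxa) hab (le_of_lt hby)]
      exact hidxmem i
    simp only [hFdef, Finset.mem_filter] at hmem
    obtain ⟨-, q, h1, h2, h3⟩ := hmem
    exact ⟨q, ⟨⟨lt_trans hxa h1, lt_trans h2 hby⟩, h3⟩, h1, h2⟩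
  · intro i a b a' b' ha hb hab ha' hb' hab'
    obtain ⟨ha01, hax1, hay1⟩ := hIoo a ha.1
    obtain ⟨hb01, hbx1, hby1⟩ := hIoo b hb.1
    obtain ⟨ha'01, ha'x1, ha'y1⟩ := hIoo a' ha'.1
    obtain ⟨hb'01, hb'x1, hb'y1⟩ := hIoo b' hb'.1
    exact hhom a b a' b' ha01 hb01 ha'01 hb'01 hax1 hab hby1 ha'x1 hab' hb'y1
      (ha.2.trans hb.2.symm) (ha'.2.trans hb'.2.symm) (ha.2.trans ha'.2.symm)
end

section
/- Let S be a finite semigroup, H ⊆ S an H-class, and suppose there exist a, b ∈ H with a·b ∈ H. Then H contains an idempotent e and (H, ·) is a group with identity e. -/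
/-- Green's R-preorder. -/
def leR {S : Type*} [Semigroup S] (s t : S) : Prop := s = t ∨ ∃ a, s = t * a
/-- Green's L-preorder. -/
def leL {S : Type*} [Semigroup S] (s t : S) : Prop := s = t ∨ ∃ a, s = a * t
/-- Green's H-equivalence. -/
def eqH {S : Type*} [Semigroup S] (s t : S) : Prop :=
  (leR s t ∧ leR t s) ∧ (leL s t ∧ leL t s)

section GreenAux

variable {S : Type*} [Semigroup S]

theorem gr_leR_trans {s t u : S} (h1 : leR s t) (h2 : leR t u) : leR s u := by
  rcases h1 with rfl | ⟨p, rfl⟩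
  · exact h2
  · rcases h2 with rfl | ⟨q, rfl⟩
    · exact Or.inr ⟨p, rfl⟩
    · exact Or.inr ⟨q * p, (mul_assoc _ _ _)⟩

theorem gr_leL_trans {s t u : S} (h1 : leL s t) (h2 : leL t u) : leL s u := by
  rcases h1 with rfl | ⟨p, rfl⟩
  · exact h2
  · rcases h2 with rfl | ⟨q, rfl⟩
    · exact Or.inr ⟨p, rfl⟩
    · exact Or.inr ⟨p * q, (mul_assoc _ _ _).symm⟩

theorem gr_leR_mul_left (c : S) {s t : S} (h : leR s t) : leR (c * s) (c * t) := by
  rcases h with rfl | ⟨p, rfl⟩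
  · exact Or.inl rfl
  · exact Or.inr ⟨p, (mul_assoc _ _ _).symm⟩

theorem gr_leL_mul_right (c : S) {s t : S} (h : leL s t) : leL (s * c) (t * c) := by
  rcases h with rfl | ⟨p, rfl⟩
  · exact Or.inl rfl
  · exact Or.inr ⟨p, (mul_assoc _ _ _)⟩

theorem gr_fixL {a b : S} (hb : leL b (a * b)) :
    ∃ g : S → S, ∀ x, leR x b → g (a * x) = x ∧ leL x (a * x) := by
  rcases hb with hb | ⟨u, hb⟩
  · refine ⟨id, ?_⟩
    intro x hx
    have h : a * x = x := by
      rcases hx with rfl | ⟨s, rfl⟩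
      · exact hb.symm
      · rw [← mul_assoc, ← hb]
    exact ⟨h, Or.inl h.symm⟩
  · refine ⟨fun y => u * y, ?_⟩
    intro x hx
    have h : u * (a * x) = x := by
      rcases hx with rfl | ⟨s, rfl⟩
      · exact hb.symm
      · simp only [← mul_assoc] at hb ⊢
        rw [← hb]
    exact ⟨h, Or.inr ⟨u, h.symm⟩⟩

theorem gr_fixR {a b : S} (ha : leR a (a * b)) :
    ∃ g : S → S, ∀ x, leL x a → g (x * b) = x ∧ leR x (x * b) := by
  rcases ha with ha | ⟨v, ha⟩
  · refine ⟨id, ?_⟩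
    intro x hx
    have h : x * b = x := by
      rcases hx with rfl | ⟨p, rfl⟩
      · exact ha.symm
      · rw [mul_assoc, ← ha]
    exact ⟨h, Or.inl h.symm⟩
  · refine ⟨fun y => y * v, ?_⟩
    intro x hx
    have h : (x * b) * v = x := by
      rcases hx with rfl | ⟨p, rfl⟩
      · exact ha.symm
      · simp only [mul_assoc] at ha ⊢
        rw [← ha]
    exact ⟨h, Or.inr ⟨v, h.symm⟩⟩

variable {H : Set S} {w : S}

theorem gr_leRH (hmem : ∀ x, x ∈ H ↔ eqH x w) {x y : S}
    (hx : x ∈ H) (hy : y ∈ H) : leR x y :=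
  gr_leR_trans ((hmem x).mp hx).1.1 ((hmem y).mp hy).1.2

theorem gr_leLH (hmem : ∀ x, x ∈ H ↔ eqH x w) {x y : S}
    (hx : x ∈ H) (hy : y ∈ H) : leL x y :=
  gr_leL_trans ((hmem x).mp hx).2.1 ((hmem y).mp hy).2.2

theorem gr_mapsL (hmem : ∀ x, x ∈ H ↔ eqH x w) {a b : S}
    (ha : a ∈ H) (hb : b ∈ H) (hab : a * b ∈ H) {x : S} (hx : x ∈ H) : a * x ∈ H := by
  obtain ⟨g, hg⟩ := gr_fixL (gr_leLH hmem hb hab)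
  have hx' := hg x (gr_leRH hmem hx hb)
  refine (hmem _).mpr ⟨⟨?_, ?_⟩, ?_, ?_⟩
  · exact gr_leR_trans (Or.inr ⟨x, rfl⟩) ((hmem a).mp ha).1.1
  · exact gr_leR_trans ((hmem _).mp hab).1.2 (gr_leR_mul_left a (gr_leRH hmem hb hx))
  · exact gr_leL_trans (Or.inr ⟨a, rfl⟩) ((hmem x).mp hx).2.1
  · exact gr_leL_trans ((hmem x).mp hx).2.2 hx'.2

theorem gr_mapsR (hmem : ∀ x, x ∈ H ↔ eqH x w) {a b : S}
    (ha : a ∈ H) (hb : b ∈ H) (hab : a * b ∈ H) {x : S} (hx : x ∈ H) : x * b ∈ H := by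
  obtain ⟨g, hg⟩ := gr_fixR (gr_leRH hmem ha hab)
  have hx' := hg x (gr_leLH hmem hx ha)
  refine (hmem _).mpr ⟨⟨?_, ?_⟩, ?_, ?_⟩
  · exact gr_leR_trans (Or.inr ⟨b, rfl⟩) ((hmem x).mp hx).1.1
  · exact gr_leR_trans ((hmem x).mp hx).1.2 hx'.2
  · exact gr_leL_trans (Or.inr ⟨x, rfl⟩) ((hmem b).mp hb).2.1
  · exact gr_leL_trans ((hmem _).mp hab).2.2 (gr_leL_mul_right b (gr_leLH hmem ha hx))

theorem gr_surjL [Finite S] (hmem : ∀ x, x ∈ H ↔ eqH x w) {a b : S}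
    (ha : a ∈ H) (hb : b ∈ H) (hab : a * b ∈ H) {y : S} (hy : y ∈ H) :
    ∃ x ∈ H, a * x = y := by
  obtain ⟨g, hg⟩ := gr_fixL (gr_leLH hmem hb hab)
  let f : H → H := fun z => ⟨a * z.1, gr_mapsL hmem ha hb hab z.2⟩
  have hinj : Function.Injective f := by
    intro z z' hzz
    have h1 := (hg z.1 (gr_leRH hmem z.2 hb)).1
    have h2 := (hg z'.1 (gr_leRH hmem z'.2 hb)).1
    have heq : a * z.1 = a * z'.1 := congrArg Subtype.val hzz
    apply Subtype.ext
    rw [← h1, ← h2, heq]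
  obtain ⟨z, hz⟩ := (Finite.injective_iff_surjective.mp hinj) ⟨y, hy⟩
  exact ⟨z.1, z.2, congrArg Subtype.val hz⟩

theorem gr_surjR [Finite S] (hmem : ∀ x, x ∈ H ↔ eqH x w) {a b : S}
    (ha : a ∈ H) (hb : b ∈ H) (hab : a * b ∈ H) {y : S} (hy : y ∈ H) :
    ∃ x ∈ H, x * b = y := by
  obtain ⟨g, hg⟩ := gr_fixR (gr_leRH hmem ha hab)
  let f : H → H := fun z => ⟨z.1 * b, gr_mapsR hmem ha hb hab z.2⟩
  have hinj : Function.Injective f := by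
    intro z z' hzz
    have h1 := (hg z.1 (gr_leLH hmem z.2 ha)).1
    have h2 := (hg z'.1 (gr_leLH hmem z'.2 ha)).1
    have heq : z.1 * b = z'.1 * b := congrArg Subtype.val hzz
    apply Subtype.ext
    rw [← h1, ← h2, heq]
  obtain ⟨z, hz⟩ := (Finite.injective_iff_surjective.mp hinj) ⟨y, hy⟩
  exact ⟨z.1, z.2, congrArg Subtype.val hz⟩

end GreenAux

/-- if H is an H-class of a finite semigroup containing a, b with a·b ∈ H,
then H is a group: it contains an idempotent identity, is closed under multiplication,
and has inverses. -/
theorem Hclass_group (S : Type*) [Semigroup S] [Fintype S] (H : Set S)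
    (hclass : ∃ w : S, H = {x | eqH x w})
    (a b : S) (ha : a ∈ H) (hb : b ∈ H) (hab : a * b ∈ H) :
    ∃ e ∈ H, e * e = e ∧
      (∀ x ∈ H, ∀ y ∈ H, x * y ∈ H) ∧
      (∀ x ∈ H, e * x = x ∧ x * e = x) ∧
      (∀ x ∈ H, ∃ y ∈ H, x * y = e ∧ y * x = e) := by
  obtain ⟨w, rfl⟩ := hclass
  have hmem : ∀ x : S, x ∈ {x : S | eqH x w} ↔ eqH x w := fun _ => Iff.rfl
  obtain ⟨e, he, hae⟩ := gr_surjL hmem ha hb hab ha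
  have hrid : ∀ x ∈ {x : S | eqH x w}, x * e = x := by
    intro x hx
    rcases gr_leLH hmem hx ha with rfl | ⟨p, rfl⟩
    · exact hae
    · rw [mul_assoc, hae]
  have hee : e * e = e := hrid e he
  have hlid : ∀ x ∈ {x : S | eqH x w}, e * x = x := by
    intro x hx
    rcases gr_leRH hmem hx he with rfl | ⟨p, rfl⟩
    · exact hee
    · rw [← mul_assoc, hee]
  have hclos : ∀ x ∈ {x : S | eqH x w}, ∀ y ∈ {x : S | eqH x w},
      x * y ∈ {x : S | eqH x w} := by
    intro x hx y hy
    have h2 : leR x (x * y) := by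
      rcases gr_leRH hmem he hy with rfl | ⟨t, rfl⟩
      · exact Or.inl (hrid x hx).symm
      · exact Or.inr ⟨t, by rw [mul_assoc]; exact (hrid x hx).symm⟩
    have h4 : leL y (x * y) := by
      rcases gr_leLH hmem he hx with rfl | ⟨p, rfl⟩
      · exact Or.inl (hlid y hy).symm
      · exact Or.inr ⟨p, by rw [← mul_assoc]; exact (hlid y hy).symm⟩
    refine (hmem _).mpr ⟨⟨?_, ?_⟩, ?_, ?_⟩
    · exact gr_leR_trans (Or.inr ⟨y, rfl⟩) ((hmem x).mp hx).1.1
    · exact gr_leR_trans ((hmem x).mp hx).1.2 h2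
    · exact gr_leL_trans (Or.inr ⟨x, rfl⟩) ((hmem y).mp hy).2.1
    · exact gr_leL_trans ((hmem y).mp hy).2.2 h4
  refine ⟨e, he, hee, hclos, fun x hx => ⟨hlid x hx, hrid x hx⟩, ?_⟩
  intro x hx
  have hxx : x * x ∈ {x : S | eqH x w} := hclos x hx x hx
  obtain ⟨y, hy, hxy⟩ := gr_surjL hmem hx hx hxx he
  obtain ⟨y', hy', hy'x⟩ := gr_surjR hmem hx hx hxx he
  have hyy : y = y' := by
    calc y = e * y := (hlid y hy).symm
    _ = (y' * x) * y := by rw [hy'x]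
    _ = y' * (x * y) := mul_assoc _ _ _
    _ = y' * e := by rw [hxy]
    _ = y' := hrid y' hy'
  exact ⟨y, hy, hxy, hyy ▸ hy'x⟩
end

section
/- Let S be a finite semigroup and s, t ∈ S. If s ≤_L t and s is R-equivalent to t, then s is H-equivalent to t. -/
/-- `apow a n = a^(n+1)` in a semigroup. -/
def apow {S : Type*} [Semigroup S] (a : S) : ℕ → S
  | 0 => a
  | n + 1 => a * apow a n

lemma apow_succ' {S : Type*} [Semigroup S] (a : S) (n : ℕ) :
    apow a (n + 1) = apow a n * a := by
  induction n with
  | zero => rfl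
  | succ n ih =>
      show a * apow a (n+1) = apow a (n+1) * a
      rw [ih, ← mul_assoc]
      exact congrArg (· * a) ih

lemma apow_add {S : Type*} [Semigroup S] (a : S) (m n : ℕ) :
    apow a (m + n + 1) = apow a m * apow a n := by
  induction n with
  | zero => exact apow_succ' a m
  | succ n ih =>
      have : m + (n + 1) + 1 = (m + n + 1) + 1 := by omega
      rw [this, apow_succ', ih, apow_succ', mul_assoc]

lemma apow_step {S : Type*} [Semigroup S] {a : S} {i p : ℕ}
    (hp : apow a (i + p) = apow a i) : ∀ d, apow a (i + d + p) = apow a (i + d) := by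
  intro d
  induction d with
  | zero => simpa using hp
  | succ d ih =>
      rw [show i + (d+1) + p = (i + d + p) + 1 by omega, apow_succ', ih, ← apow_succ', show i + (d+1) = i + d + 1 from rfl]

lemma apow_periodic {S : Type*} [Semigroup S] {a : S} {i p : ℕ}
    (hp : apow a (i + p) = apow a i) : ∀ m k, i ≤ m → apow a (m + k * p) = apow a m := by
  intro m k hm
  induction k with
  | zero => simp
  | succ k ih =>
      rw [show m + (k+1) * p = (m + k * p) + p by ring]
      obtain ⟨d, hd⟩ := Nat.exists_eq_add_of_le (le_trans hm (Nat.le_add_right m (k*p)))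
      rw [hd, apow_step hp, ← hd, ih]

/-- In a finite semigroup, some `apow a N` is idempotent. -/
lemma exists_idem_apow {S : Type*} [Semigroup S] [Fintype S] (a : S) :
    ∃ N, apow a N * apow a N = apow a N := by
  have : ¬ Function.Injective (apow a) := fun h => (Finite.of_injective _ h).false
  obtain ⟨i, j, hij, hne⟩ : ∃ i j, apow a i = apow a j ∧ i ≠ j := by
    simpa [Function.Injective] using this
  wlog h : i < j generalizing i j
  · exact this j i hij.symm hne.symm (by omega)
  set p := j - i with hp
  have hpp : apow a (i + p) = apow a i := by rw [show i + p = j by omega, hij]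
  have hper := apow_periodic hpp
  have hp1 : 1 ≤ p := by omega
  have hq : i + 1 ≤ (i + 1) * p := Nat.le_mul_of_pos_right _ (by omega)
  set q := (i + 1) * p with hqd
  refine ⟨q - 1, ?_⟩
  have hN : i ≤ q - 1 := by omega
  rw [← apow_add, show (q - 1) + (q - 1) + 1 = (q - 1) + (i+1) * p by omega,
    hper _ (i+1) hN]

/-- in a finite semigroup, s ≤_L t together with s R t implies s H t. -/
theorem leL_R_imp_H (S : Type*) [Semigroup S] [Fintype S] (s t : S)
    (hL : leL s t) (hR : leR s t ∧ leR t s) :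
    (leR s t ∧ leR t s) ∧ (leL s t ∧ leL t s) := by
  refine ⟨hR, hL, ?_⟩
  rcases hL with rfl | ⟨a, ha⟩
  · left; rfl
  rcases hR.2 with rfl | ⟨b, hb⟩
  · left; rfl
  -- t = a * t * b
  have key : ∀ n, (apow a n * t) * apow b n = t := by
    intro n
    induction n with
    | zero => show (a * t) * b = t; rw [← ha, ← hb]
    | succ n ih =>
        show ((a * apow a n) * t) * (b * apow b n) = t
        calc ((a * apow a n) * t) * (b * apow b n)
            = ((a * apow a n) * t) * (apow b n * b) := by rw [← apow_succ']; rfl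
          _ = (a * ((apow a n * t) * apow b n)) * b := by simp [mul_assoc]
          _ = (a * t) * b := by rw [ih]
          _ = t := by rw [← ha, ← hb]
  obtain ⟨N, hN⟩ := exists_idem_apow a
  have het : apow a N * t = t := by
    conv_lhs => rw [← key N]
    rw [← mul_assoc, ← mul_assoc, hN]
    exact key N
  -- t = apow a (2N+1) * t = apow a (2N) * (a * t) = apow a (2N) * s
  right
  refine ⟨apow a (N + N), ?_⟩
  have h1 : apow a (N + N + 1) * t = t := by rw [apow_add, mul_assoc, het, het]
  rw [apow_succ'] at h1
  rw [ha, ← mul_assoc, h1]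
end

section
/- Let (P, ≤) be a finite partial order and c : {(m,n) ∈ ℕ × ℕ | m < n} → P a right-ordered colouring, meaning c(x,y) ≤ c(x,y') whenever x < y ≤ y'. Then there exists an infinite set X ⊆ ℕ such that c is constant on pairs from X. -/
/-- ordered Ramsey theorem over ℕ: every right-ordered colouring of pairs
of naturals by a finite poset admits an infinite homogeneous set. -/
theorem ordered_ramsey_N (P : Type*) [PartialOrder P] [Fintype P]
    (c : ℕ → ℕ → P)
    (hord : ∀ x y y' : ℕ, x < y → y ≤ y' → c x y ≤ c x y') :
    ∃ X : Set ℕ, X.Infinite ∧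
      ∀ x ∈ X, ∀ y ∈ X, ∀ x' ∈ X, ∀ y' ∈ X,
        x < y → x' < y' → c x y = c x' y' := by
  -- Step 1: for each x, the sequence y ↦ c x y stabilizes.
  have hstab : ∀ x : ℕ, ∃ Nx : ℕ, x < Nx ∧ ∀ y, Nx ≤ y → c x y = c x Nx := by
    intro x
    have hwf : WellFounded ((· > ·) : P → P → Prop) :=
      (Finite.to_wellFoundedGT (α := P)).wf
    obtain ⟨n, hn⟩ := wellFoundedGT_iff_monotone_chain_condition.mp ⟨hwf⟩
      ⟨fun n => c x (x + 1 + n), fun m n hmn =>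
        hord x (x + 1 + m) (x + 1 + n) (by omega) (by omega)⟩
    change ∀ m, n ≤ m → c x (x + 1 + n) = c x (x + 1 + m) at hn
    refine ⟨x + 1 + n, by omega, ?_⟩
    intro y hy
    have h1 : c x y = c x (x + 1 + (y - x - 1)) := by congr 1; omega
    rw [h1, ← hn (y - x - 1) (by omega)]
  choose N hNlt hNeq using hstab
  set f : ℕ → P := fun x => c x (N x) with hf
  obtain ⟨p, hp⟩ := Finite.exists_infinite_fiber f
  have hSinf : (f ⁻¹' {p} : Set ℕ).Infinite := (Set.infinite_coe_iff (s := f ⁻¹' {p})).mp hp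
  set M : ℕ → ℕ := fun x => (Finset.range (x + 1)).sup N with hM
  have hNM : ∀ x, N x ≤ M x := fun x => Finset.le_sup (Finset.self_mem_range_succ x)
  have next : ∀ b : ℕ, ∃ m ∈ f ⁻¹' {p}, b < m := fun b => hSinf.exists_gt b
  choose nx hnxS hnxgt using next
  set a : ℕ → ℕ := fun n => Nat.rec (nx 0) (fun _ prev => nx (M prev)) n with ha
  have haS : ∀ n, a n ∈ f ⁻¹' {p} := by
    intro n; cases n with
    | zero => exact hnxS 0
    | succ k => exact hnxS _
  have hstep : ∀ n, M (a n) < a (n + 1) := fun n => hnxgt _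
  have hmono : StrictMono a := by
    apply strictMono_nat_of_lt_succ
    intro n
    calc a n < N (a n) := hNlt (a n)
    _ ≤ M (a n) := hNM (a n)
    _ < a (n + 1) := hstep n
  have key : ∀ i j, a i < a j → c (a i) (a j) = p := by
    intro i j hij
    have hij' : i < j := hmono.lt_iff_lt.mp hij
    have h1 : N (a i) ≤ a j := by
      have := hmono.monotone (show i + 1 ≤ j by omega)
      have := hstep i
      have := hNM (a i)
      omega
    rw [hNeq (a i) (a j) h1]
    exact haS i
  refine ⟨Set.range a, Set.infinite_range_of_injective hmono.injective, ?_⟩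
  rintro x ⟨i, rfl⟩ y ⟨j, rfl⟩ x' ⟨i', rfl⟩ y' ⟨j', rfl⟩ hxy hxy'
  rw [key i j hxy, key i' j' hxy']
end

section
/- Let S be a finite semigroup and c : {(m,n) ∈ ℕ × ℕ | m < n} → S an additive colouring, i.e. c(x,z) = c(x,y)·c(y,z) whenever x < y < z. Then there exists an infinite set X ⊆ ℕ such that c is constant on pairs from X, and the common value is an idempotent of S. -/
/-- additive Ramsey theorem over ℕ: every additive colouring of pairs of
naturals by a finite semigroup admits an infinite homogeneous set whose colour is
idempotent. -/
theorem additive_ramsey_N (S : Type*) [Semigroup S] [Fintype S]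
    (c : ℕ → ℕ → S)
    (hadd : ∀ x y z : ℕ, x < y → y < z → c x z = c x y * c y z) :
    ∃ (X : Set ℕ) (e : S), X.Infinite ∧ e * e = e ∧
      ∀ x ∈ X, ∀ y ∈ X, x < y → c x y = e := by
  classical
  -- key refinement step
  have key : ∀ A : Set ℕ, A.Infinite → ∃ B : Set ℕ, B.Infinite ∧ B ⊆ A ∧
      (∀ b ∈ B, sInf A < b) ∧ ∃ s, ∀ b ∈ B, c (sInf A) b = s := by
    intro A hA
    set a := sInf A with ha
    have hA' : ({b ∈ A | a < b}).Infinite := by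
      have : {b ∈ A | a < b} = A \ Set.Iic a := by
        ext b; simp [Set.mem_setOf_eq, not_le, and_comm]
      rw [this]
      exact hA.diff (Set.finite_Iic a)
    -- pigeonhole over colours
    by_contra h
    push_neg at h
    have hfin : ∀ s : S, ({b ∈ A | a < b ∧ c a b = s}).Finite := by
      intro s
      by_contra hinf
      obtain ⟨b, hb, hbne⟩ := h {b ∈ A | a < b ∧ c a b = s} hinf
        (fun b hb => hb.1) (fun b hb => hb.2.1) s
      exact hbne hb.2.2
    have : ({b ∈ A | a < b}).Finite := by
      have : {b ∈ A | a < b} ⊆ ⋃ s : S, {b ∈ A | a < b ∧ c a b = s} := by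
        intro b hb
        exact Set.mem_iUnion.2 ⟨c a b, hb.1, hb.2, rfl⟩
      exact (Set.finite_iUnion hfin).subset this
    exact hA' this
  choose F hF1 hF2 hF3 hF4 using key
  -- iterate
  let G : Set ℕ → Set ℕ := fun A => if h : A.Infinite then F A h else Set.univ
  let R : ℕ → Set ℕ := fun n => G^[n] Set.univ
  have hRinf : ∀ n, (R n).Infinite := by
    intro n
    induction n with
    | zero => exact Set.infinite_univ
    | succ n ih =>
      show (G^[n+1] Set.univ).Infinite
      rw [Function.iterate_succ_apply']
      show (G (R n)).Infinite
      simp only [G, dif_pos ih]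
      exact hF1 _ ih
  have hRsucc : ∀ n, R (n+1) = F (R n) (hRinf n) := by
    intro n
    show G^[n+1] Set.univ = _
    rw [Function.iterate_succ_apply']
    show G (R n) = _
    simp only [G, dif_pos (hRinf n)]
  let a : ℕ → ℕ := fun n => sInf (R n)
  have haR : ∀ n, a n ∈ R n := fun n => Nat.sInf_mem (hRinf n).nonempty
  have hsub : ∀ n, R (n+1) ⊆ R n := fun n => by rw [hRsucc n]; exact hF2 _ _
  have hmono : ∀ m n, m ≤ n → R n ⊆ R m := by
    intro m n h
    induction n with
    | zero => cases Nat.le_zero.1 h; exact fun _ h => h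
    | succ n ih =>
      rcases Nat.le_succ_iff.1 h with h' | h'
      · exact fun x hx => ih h' (hsub n hx)
      · subst h'; exact fun _ h => h
  -- colour emitted at stage n
  let s : ℕ → S := fun n => (hF4 (R n) (hRinf n)).choose
  have hcol : ∀ m n, m < n → c (a m) (a n) = s m ∧ a m < a n := by
    intro m n h
    have hmem : a n ∈ R (m+1) := hmono (m+1) n h (haR n)
    rw [hRsucc m] at hmem
    exact ⟨(hF4 (R m) (hRinf m)).choose_spec _ hmem, hF3 _ _ _ hmem⟩
  have hamono : StrictMono a := strictMono_nat_of_lt_succ fun n => (hcol n (n+1) (Nat.lt_succ_self n)).2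
  -- pigeonhole on s
  obtain ⟨e, he⟩ := Finite.exists_infinite_fiber s
  have hI : (s ⁻¹' {e}).Infinite := Set.infinite_coe_iff.1 he
  refine ⟨a '' (s ⁻¹' {e}), e, hI.image hamono.injective.injOn, ?_, ?_⟩
  · -- idempotent: pick i < j < k in the fiber
    obtain ⟨i, hi⟩ := hI.nonempty
    obtain ⟨j, hj, hij⟩ := hI.exists_gt i
    obtain ⟨k, hk, hjk⟩ := hI.exists_gt j
    have h1 : c (a i) (a k) = e := by
      rw [(hcol i k (hij.trans hjk)).1]; exact hi
    have h2 : c (a i) (a j) = e := by rw [(hcol i j hij).1]; exact hi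
    have h3 : c (a j) (a k) = e := by rw [(hcol j k hjk).1]; exact hj
    have := hadd (a i) (a j) (a k) (hamono hij) (hamono hjk)
    rw [h1, h2, h3] at this
    exact this.symm
  · rintro x ⟨i, hi, rfl⟩ y ⟨j, hj, rfl⟩ hxy
    have hij : i < j := hamono.lt_iff_lt.1 hxy
    rw [(hcol i j hij).1]; exact hi
end

section
/- Let c : {(m,n) ∈ ℕ × ℕ | m < n} → P be a right-ordered colouring into a finite poset P. Say a colour p occurs after n if there exist n ≤ m < k with c(m,k) = p. Then there exists n₀ such that every colour occurring after n₀ occurs after n for every n; moreover, for any ≤_P-maximal colour p occurring after n₀ (among colours occurring after n₀), there is an infinite c-homogeneous set with colour p. -/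
/-- for a right-ordered colouring of pairs of naturals by a finite poset,
there is n₀ such that every colour occurring after n₀ occurs arbitrarily far, and every
≤-maximal such colour is the colour of an infinite homogeneous set. -/
theorem ordered_ramsey_N_maximal_colour (P : Type*) [PartialOrder P] [Fintype P]
    (c : ℕ → ℕ → P)
    (hord : ∀ x y y' : ℕ, x < y → y ≤ y' → c x y ≤ c x y') :
    ∃ n₀ : ℕ,
      (∀ p : P, (∃ m k, n₀ ≤ m ∧ m < k ∧ c m k = p) →
        ∀ n : ℕ, ∃ m k, n ≤ m ∧ m < k ∧ c m k = p) ∧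
      (∀ p : P, (∃ m k, n₀ ≤ m ∧ m < k ∧ c m k = p) →
        (∀ q : P, (∃ m k, n₀ ≤ m ∧ m < k ∧ c m k = q) → p ≤ q → p = q) →
        ∃ X : Set ℕ, X.Infinite ∧ ∀ x ∈ X, ∀ y ∈ X, x < y → c x y = p) := by
  classical
  set Occ : ℕ → Set P := fun n => {p | ∃ m k, n ≤ m ∧ m < k ∧ c m k = p} with hOcc
  have hanti : ∀ n n' : ℕ, n ≤ n' → Occ n' ⊆ Occ n := by
    rintro n n' h p ⟨m, k, hm, hk, hc⟩
    exact ⟨m, k, h.trans hm, hk, hc⟩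
  have hfin : ∀ n, (Occ n).Finite := fun n => Set.toFinite _
  let g : ℕ → Finset P := fun n => (hfin n).toFinset
  have hganti : ∀ n n' : ℕ, n ≤ n' → g n' ⊆ g n := by
    intro n n' h
    exact Set.Finite.toFinset_subset_toFinset.mpr (hanti n n' h)
  -- pick n₀ minimizing card (g n)
  have hex : (Set.range fun n => (g n).card).Nonempty := ⟨(g 0).card, 0, rfl⟩
  obtain ⟨n₀, hn₀⟩ := Nat.sInf_mem hex
  have hn₀' : (g n₀).card = sInf (Set.range fun n => (g n).card) := hn₀
  have hmin : ∀ n, (g n₀).card ≤ (g n).card := by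
    intro n
    rw [hn₀']
    exact Nat.sInf_le ⟨n, rfl⟩
  have hstab : ∀ n, n₀ ≤ n → Occ n = Occ n₀ := by
    intro n h
    have hg : g n = g n₀ := Finset.eq_of_subset_of_card_le (hganti n₀ n h) (hmin n)
    exact Set.Finite.toFinset_inj.mp hg
  have part1 : ∀ p : P, p ∈ Occ n₀ → ∀ n : ℕ, p ∈ Occ n := by
    intro p hp n
    rcases le_total n n₀ with h | h
    · exact hanti n n₀ h hp
    · rw [hstab n h]; exact hp
  -- row stabilization
  have hrow : ∀ x : ℕ, ∃ N : ℕ, x < N ∧ ∀ y, N ≤ y → c x y = c x N := by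
    intro x
    set S : Set P := Set.range (fun y : ℕ => c x (x + 1 + y)) with hS
    obtain ⟨a, ha, hamax⟩ := Set.Finite.exists_maximalFor id S (Set.toFinite S) ⟨_, 0, rfl⟩
    obtain ⟨y₀, rfl⟩ := ha
    refine ⟨x + 1 + y₀, by omega, ?_⟩
    intro y hy
    have hxy : x < y := by omega
    have h1 : c x (x + 1 + y₀) ≤ c x y := hord x (x + 1 + y₀) y (by omega) hy
    have h2 : c x y ∈ S := ⟨y - (x + 1), by simp [hS]; congr 1; omega⟩
    exact le_antisymm (hamax h2 h1) h1
  refine ⟨n₀, ?_, ?_⟩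
  · intro p hp n
    exact part1 p hp n
  · intro p hp hmax
    -- key step: eventual rows with colour p exist beyond any n
    have H : ∀ n : ℕ, ∃ m N : ℕ, n ≤ m ∧ m < N ∧ ∀ y, N ≤ y → c m y = p := by
      intro n
      obtain ⟨m, k, hm, hk, hc⟩ := part1 p hp (max n n₀)
      obtain ⟨N, hmN, hrowN⟩ := hrow m
      have hle : p ≤ c m N := by
        have h1 : c m k ≤ c m (max k N) := hord m k (max k N) hk (le_max_left _ _)
        have h2 : c m (max k N) = c m N := hrowN _ (le_max_right _ _)
        rw [hc, h2] at h1
        exact h1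
      have hOccN : c m N ∈ Occ n₀ := ⟨m, N, le_trans (le_max_right n n₀) hm, hmN, rfl⟩
      have hpeq : p = c m N := hmax _ hOccN hle
      exact ⟨m, N, le_trans (le_max_left n n₀) hm, hmN,
        fun y hy => by rw [hrowN y hy, ← hpeq]⟩
    choose m Nf hm hmN hcol using H
    -- recursive construction
    let u : ℕ → ℕ := fun i => Nat.rec 0 (fun _ prev => Nf prev) i
    have hu : ∀ i, u (i + 1) = Nf (u i) := fun i => rfl
    have husmono : StrictMono u := by
      apply strictMono_nat_of_lt_succ
      intro i
      have := hm (u i)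
      have := hmN (u i)
      rw [hu]
      omega
    let x : ℕ → ℕ := fun i => m (u i)
    have hxmono : StrictMono x := by
      apply strictMono_nat_of_lt_succ
      intro i
      have h1 : x i < Nf (u i) := hmN (u i)
      have h2 : Nf (u i) = u (i + 1) := (hu i).symm
      have h3 : u (i + 1) ≤ m (u (i + 1)) := hm _
      have h1' : m (u i) < Nf (u i) := h1
      show m (u i) < m (u (i + 1))
      omega
    have hcij : ∀ i j, i < j → c (x i) (x j) = p := by
      intro i j hij
      apply hcol (u i)
      have h1 : Nf (u i) = u (i + 1) := (hu i).symm
      have h2 : u (i + 1) ≤ u j := husmono.monotone hij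
      have h3 : u j ≤ m (u j) := hm _
      show Nf (u i) ≤ m (u j)
      omega
    refine ⟨Set.range x, Set.infinite_range_of_injective hxmono.injective, ?_⟩
    rintro a ⟨i, rfl⟩ b ⟨j, rfl⟩ hab
    exact hcij i j (hxmono.lt_iff_lt.mp hab)
end
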